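/- arXiv:0905.2085 — 2 statements merged into one kernel-verified Lean document; each statement's English description precedes it below -/
import Mathlib

section
/- (Bosonic Stokes theorem of Clifford analysis, on a box.) Let Ω ⊆ ℝ^m be open, K = Π_{i=1}^m [a_i,b_i] ⊂ Ω a compact box with faces F_i^+ = {x ∈ K : x_i = b_i} and F_i^− = {x ∈ K : x_i = a_i}, and let f, g : Ω → Cl_{0,m} be of class C¹. Then Σ_{i=1}^m ( ∫_{F_i^+} f·e_i·g dS − ∫_{F_i^−} f·e_i·g dS ) = ∫_K ( (f∂)·g + f·(∂g) ) dV, where dS is (m−1)-dimensional Lebesgue measure on the faces and dV is Lebesgue measure on ℝ^m. (The left-hand side is the Clifford surface integral ∫_{∂K} f dσ g, dσ = n̲ dS with n̲ the outward unit normal written as a Clifford vector.) -/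
/-!
STATEMENT 7 (bosonic Stokes theorem of Clifford analysis, on a box): for a compact box
K = Π[a_i,b_i] inside an open Ω ⊆ ℝ^m and C¹ functions f, g : Ω → Cl_{0,m},
Σ_i (∫_{F_i^+} f e_i g dS − ∫_{F_i^−} f e_i g dS) = ∫_K ((f∂)g + f(∂g)) dV.
-/

noncomputable section
open MeasureTheory

namespace BosonicStokes

variable (m : ℕ)

/-- The real Clifford algebra Cl_{0,m}: the Clifford algebra of the negative definite
quadratic form −|x|² on ℝ^m. -/
abbrev Cl (m : ℕ) : Type :=
  CliffordAlgebra (QuadraticMap.weightedSumSquares ℝ (fun _ : Fin m => (-1:ℝ)))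

/-- The Clifford generators e_i, satisfying e_je_k + e_ke_j = −2δ_{jk}. -/
def e {m : ℕ} (i : Fin m) : Cl m :=
  CliffordAlgebra.ι (QuadraticMap.weightedSumSquares ℝ (fun _ : Fin m => (-1:ℝ)))
    (Pi.single i 1)

variable {V : Type*} [AddCommGroup V] [Module ℝ V]

/-- A V-valued function is of class C¹ on s when all of its components with respect to a
(Hamel) basis of V are; for finite-dimensional V this is the usual notion. -/
def C1On {m : ℕ} (F : (Fin m → ℝ) → V) (s : Set (Fin m → ℝ)) : Prop :=
  ∀ I, ContDiffOn ℝ 1 (fun x => (Module.Basis.ofVectorSpace ℝ V).coord I (F x)) s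

/-- The partial derivative ∂_{x_j} of a V-valued function, computed componentwise with
respect to a (Hamel) basis of V. -/
def pd {m : ℕ} (j : Fin m) (F : (Fin m → ℝ) → V) (x : Fin m → ℝ) : V :=
  ∑ᶠ I, (fderiv ℝ (fun z => (Module.Basis.ofVectorSpace ℝ V).coord I (F z)) x (Pi.single j 1)) •
     Module.Basis.ofVectorSpace ℝ V I

/-- The integral of a V-valued function over S with respect to μ, computed componentwise
with respect to a (Hamel) basis of V. -/
def vInt {X : Type*} [MeasurableSpace X] (μ : Measure X) (S : Set X) (F : X → V) : V :=
  ∑ᶠ I, (∫ x in S, (Module.Basis.ofVectorSpace ℝ V).coord I (F x) ∂μ) • Module.Basis.ofVectorSpace ℝ V I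

/-- The integral of a V-valued function over the face x_i = c of the box [a,b] ⊂ ℝ^m,
with respect to (m−1)-dimensional Lebesgue measure: the face is parametrized by the
remaining m−1 coordinates. -/
def faceInt {m : ℕ} (a b : Fin m → ℝ) (i : Fin m) (c : ℝ) (F : (Fin m → ℝ) → V) : V :=
  vInt (volume : Measure ({j : Fin m // j ≠ i} → ℝ))
    (Set.Icc (fun j => a j.1) (fun j => b j.1))
    (fun x' => F (fun j => if h : j = i then c else x' ⟨j, h⟩))

/-- The left Dirac derivative ∂g = Σ_j e_j ∂_{x_j}g. -/
def leftDb {m : ℕ} (g : (Fin m → ℝ) → Cl m) (x : Fin m → ℝ) : Cl m :=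
  ∑ j : Fin m, e j * pd j g x

/-- The right Dirac derivative f∂ = Σ_j (∂_{x_j}f) e_j. -/
def rightDb {m : ℕ} (f : (Fin m → ℝ) → Cl m) (x : Fin m → ℝ) : Cl m :=
  ∑ j : Fin m, pd j f x * e j


lemma Q_single {m : ℕ} (i : Fin m) :
    QuadraticMap.weightedSumSquares ℝ (fun _ : Fin m => (-1:ℝ)) (Pi.single i 1) = -1 := by
  rw [QuadraticMap.weightedSumSquares_apply]
  rw [Finset.sum_eq_single i]
  · simp
  · intro j _ hj; simp [Pi.single_apply, hj]
  · simp

lemma e_mul_self {m : ℕ} (i : Fin m) :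
    e i * e i = algebraMap ℝ (Cl m) (-1) := by
  rw [e, CliffordAlgebra.ι_sq_scalar, Q_single]

lemma e_mul_e_of_ne {m : ℕ} {i j : Fin m} (h : i ≠ j) :
    e i * e j = -(e j * e i) := by
  have hpolar : QuadraticMap.polar
      (⇑(QuadraticMap.weightedSumSquares ℝ (fun _ : Fin m => (-1:ℝ))))
      (Pi.single i 1) (Pi.single j 1) = 0 := by
    rw [QuadraticMap.polar]
    rw [QuadraticMap.weightedSumSquares_apply, QuadraticMap.weightedSumSquares_apply,
      QuadraticMap.weightedSumSquares_apply]
    rw [← Finset.sum_sub_distrib, ← Finset.sum_sub_distrib]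
    apply Finset.sum_eq_zero
    intro k _
    rcases eq_or_ne k i with rfl | hki
    · simp [Pi.single_apply, h.symm]
    · rcases eq_or_ne k j with rfl | hkj
      · simp [Pi.single_apply, hki]
      · simp [Pi.single_apply, hki, hkj]
  have := CliffordAlgebra.ι_mul_ι_add_swap (Q := QuadraticMap.weightedSumSquares ℝ
    (fun _ : Fin m => (-1:ℝ))) (Pi.single i 1) (Pi.single j 1)
  rw [hpolar, map_zero] at this
  rw [e, e]
  linear_combination (norm := noncomm_ring) this


/-- Product of generators over a finset (in increasing order). -/
def P {m : ℕ} (s : Finset (Fin m)) : Cl m := ((s.sort (· ≤ ·)).map e).prod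

lemma sortedProd_mem_span {m : ℕ} {l : List (Fin m)} (hl : l.Pairwise (· < ·)) :
    ((l.map e).prod : Cl m) ∈ Submodule.span ℝ (Set.range (P (m := m))) := by
  apply Submodule.subset_span
  refine ⟨l.toFinset, ?_⟩
  rw [P, (List.toFinset_sort (· ≤ ·) hl.nodup).2 (hl.imp le_of_lt)]

/-- Key commutation lemma. -/
lemma key {m : ℕ} (l : List (Fin m)) (hl : l.Pairwise (· < ·)) (i : Fin m) :
    ∃ (c : ℝ) (l' : List (Fin m)), l'.Pairwise (· < ·) ∧ (∀ x ∈ l', x = i ∨ x ∈ l) ∧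
      e i * (l.map e).prod = c • (l'.map e).prod := by
  induction l with
  | nil =>
    exact ⟨1, [i], List.pairwise_singleton _ i, by simp, by simp⟩
  | cons j t ih =>
    rw [List.pairwise_cons] at hl
    obtain ⟨hjt, hts⟩ := hl
    rcases lt_trichotomy i j with hij | rfl | hij
    · refine ⟨1, i :: j :: t, ?_, ?_, by simp⟩
      · rw [List.pairwise_cons]
        refine ⟨fun x hx => ?_, List.pairwise_cons.2 ⟨hjt, hts⟩⟩
        rcases List.mem_cons.1 hx with rfl | hx
        · exact hij
        · exact hij.trans (hjt x hx)
      · intro x hx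
        rcases List.mem_cons.1 hx with rfl | hx
        · exact Or.inl rfl
        · exact Or.inr hx
    · refine ⟨-1, t, hts, fun x hx => Or.inr (List.mem_cons_of_mem _ hx), ?_⟩
      rw [List.map_cons, List.prod_cons, ← mul_assoc, e_mul_self,
        Algebra.algebraMap_eq_smul_one, smul_mul_assoc, one_mul]
    · obtain ⟨c, l'', hs'', hmem'', heq''⟩ := ih hts
      refine ⟨-c, j :: l'', ?_, ?_, ?_⟩
      · rw [List.pairwise_cons]
        refine ⟨fun x hx => ?_, hs''⟩
        rcases hmem'' x hx with rfl | hx'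
        · exact hij
        · exact hjt x hx'
      · intro x hx
        rcases List.mem_cons.1 hx with rfl | hx
        · exact Or.inr (List.mem_cons_self)
        · rcases hmem'' x hx with rfl | hx'
          · exact Or.inl rfl
          · exact Or.inr (List.mem_cons_of_mem _ hx')
      · rw [List.map_cons, List.prod_cons, ← mul_assoc, e_mul_e_of_ne (ne_of_gt hij),
          neg_mul, mul_assoc, heq'', List.map_cons, List.prod_cons]
        rw [mul_smul_comm, neg_smul]

lemma e_mul_mem_span {m : ℕ} (i : Fin m) {x : Cl m}
    (hx : x ∈ Submodule.span ℝ (Set.range (P (m := m)))) :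
    e i * x ∈ Submodule.span ℝ (Set.range (P (m := m))) := by
  induction hx using Submodule.span_induction with
  | mem y hy =>
    obtain ⟨s, rfl⟩ := hy
    obtain ⟨c, l', hs', _, heq⟩ := key (s.sort (· ≤ ·)) (Finset.sortedLT_sort s).pairwise i
    rw [P, heq]
    exact Submodule.smul_mem _ _ (sortedProd_mem_span hs')
  | zero => simp
  | add y z _ _ hy hz => rw [mul_add]; exact Submodule.add_mem _ hy hz
  | smul c y _ hy => rw [mul_smul_comm]; exact Submodule.smul_mem _ _ hy

lemma listProd_mem_span {m : ℕ} (l : List (Fin m)) :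
    ((l.map e).prod : Cl m) ∈ Submodule.span ℝ (Set.range (P (m := m))) := by
  induction l with
  | nil =>
    simpa using sortedProd_mem_span (l := ([] : List (Fin m))) (by simp)
  | cons i t ih =>
    rw [List.map_cons, List.prod_cons]
    exact e_mul_mem_span i ih

lemma span_P_eq_top (m : ℕ) : Submodule.span ℝ (Set.range (P (m := m))) = ⊤ := by
  rw [eq_top_iff]
  rintro a -
  induction a using CliffordAlgebra.induction with
  | algebraMap r =>
    rw [Algebra.algebraMap_eq_smul_one]
    refine Submodule.smul_mem _ _ ?_
    simpa using listProd_mem_span ([] : List (Fin m))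
  | ι x =>
    have h1 : ∀ i : Fin m, (Pi.single i (x i) : Fin m → ℝ) = x i • (Pi.single i 1 : Fin m → ℝ) := by
      intro i; ext j
      rcases eq_or_ne i j with rfl | hij
      · simp
      · simp [Pi.single_eq_of_ne (Ne.symm hij)]
    have : CliffordAlgebra.ι (QuadraticMap.weightedSumSquares ℝ (fun _ : Fin m => (-1:ℝ))) x
        = ∑ i : Fin m, x i • e i := by
      conv_lhs => rw [← Finset.univ_sum_single x]
      rw [map_sum]
      refine Finset.sum_congr rfl fun i _ => ?_
      rw [h1, _root_.map_smul, e]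
    rw [this]
    refine Submodule.sum_mem _ fun i _ => Submodule.smul_mem _ _ ?_
    simpa using listProd_mem_span [i]
  | mul a b ha hb =>
    have hmul : Submodule.span ℝ (Set.range (P (m := m))) *
        Submodule.span ℝ (Set.range (P (m := m))) ≤
        Submodule.span ℝ (Set.range (P (m := m))) := by
      rw [Submodule.span_mul_span]
      rw [Submodule.span_le]
      rintro _ ⟨u, ⟨s, rfl⟩, v, ⟨t, rfl⟩, rfl⟩
      have : P (m := m) s * P t = (((s.sort (· ≤ ·)) ++ (t.sort (· ≤ ·))).map e).prod := by
        rw [List.map_append, List.prod_append]; rfl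
      show P (m := m) s * P t ∈ _
      rw [this]
      exact listProd_mem_span _
    exact hmul (Submodule.mul_mem_mul ha hb)
  | add a b ha hb => exact Submodule.add_mem _ ha hb

instance clFiniteDimensional (m : ℕ) : FiniteDimensional ℝ (Cl m) := by
  have h : FiniteDimensional ℝ (Submodule.span ℝ (Set.range (P (m := m)))) :=
    FiniteDimensional.span_of_finite ℝ (Set.finite_range _)
  rw [span_P_eq_top] at h
  exact Module.Finite.equiv Submodule.topEquiv



section Analysis

variable [FiniteDimensional ℝ V]

lemma coord_finsum_smul (v : V) :
    ∑ᶠ I, (Module.Basis.ofVectorSpace ℝ V).coord I v • Module.Basis.ofVectorSpace ℝ V I = v := by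
  haveI : Fintype (Module.Basis.ofVectorSpaceIndex ℝ V) :=
    FiniteDimensional.fintypeBasisIndex (Module.Basis.ofVectorSpace ℝ V)
  rw [finsum_eq_sum_of_fintype]
  exact (Module.Basis.ofVectorSpace ℝ V).sum_repr v

lemma coord_finsum (c : Module.Basis.ofVectorSpaceIndex ℝ V → ℝ) (I : Module.Basis.ofVectorSpaceIndex ℝ V) :
    (Module.Basis.ofVectorSpace ℝ V).coord I (∑ᶠ J, c J • Module.Basis.ofVectorSpace ℝ V J) = c I := by
  classical
  haveI : Fintype (Module.Basis.ofVectorSpaceIndex ℝ V) :=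
    FiniteDimensional.fintypeBasisIndex (Module.Basis.ofVectorSpace ℝ V)
  have key : ∀ J : Module.Basis.ofVectorSpaceIndex ℝ V,
      (Module.Basis.ofVectorSpace ℝ V).coord I (c J • Module.Basis.ofVectorSpace ℝ V J)
        = if J = I then c J else 0 := by
    intro J
    rw [_root_.map_smul, Module.Basis.coord_apply, Module.Basis.repr_self_apply, smul_eq_mul]
    split <;> simp
  rw [finsum_eq_sum_of_fintype, map_sum]
  simp only [key]
  simp [Finset.sum_ite_eq']

lemma coord_vInt {X : Type*} [MeasurableSpace X] (μ : Measure X) (S : Set X) (F : X → V)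
    (I : Module.Basis.ofVectorSpaceIndex ℝ V) :
    (Module.Basis.ofVectorSpace ℝ V).coord I (vInt μ S F)
      = ∫ x in S, (Module.Basis.ofVectorSpace ℝ V).coord I (F x) ∂μ :=
  coord_finsum _ I

lemma coord_faceInt {m : ℕ} (a b : Fin m → ℝ) (i : Fin m) (c : ℝ) (F : (Fin m → ℝ) → V)
    (I : Module.Basis.ofVectorSpaceIndex ℝ V) :
    (Module.Basis.ofVectorSpace ℝ V).coord I (faceInt a b i c F)
      = ∫ x' in Set.Icc (fun j : {j : Fin m // j ≠ i} => a j.1) (fun j => b j.1),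
          (Module.Basis.ofVectorSpace ℝ V).coord I
            (F (fun j => if h : j = i then c else x' ⟨j, h⟩)) :=
  coord_vInt _ _ _ I

end Analysis

section Normed

variable {W : Type*} [NormedAddCommGroup W] [NormedSpace ℝ W] [FiniteDimensional ℝ W]

lemma pd_eq_fderiv {m : ℕ} {F : (Fin m → ℝ) → W} {x : Fin m → ℝ}
    {D : (Fin m → ℝ) →L[ℝ] W} (h : HasFDerivAt F D x) (j : Fin m) :
    pd j F x = D (Pi.single j 1) := by
  have hc : ∀ I : Module.Basis.ofVectorSpaceIndex ℝ W,
      fderiv ℝ (fun z => (Module.Basis.ofVectorSpace ℝ W).coord I (F z)) x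
        = (LinearMap.toContinuousLinearMap ((Module.Basis.ofVectorSpace ℝ W).coord I)).comp D := by
    intro I
    exact (((LinearMap.toContinuousLinearMap
      ((Module.Basis.ofVectorSpace ℝ W).coord I)).hasFDerivAt).comp x h).fderiv
  rw [pd]
  simp only [hc, ContinuousLinearMap.coe_comp', Function.comp_apply,
    LinearMap.coe_toContinuousLinearMap']
  exact coord_finsum_smul _

lemma C1On.contDiffOn {m : ℕ} {F : (Fin m → ℝ) → W} {s : Set (Fin m → ℝ)} (h : C1On F s) :
    ContDiffOn ℝ 1 F s := by
  haveI : Fintype (Module.Basis.ofVectorSpaceIndex ℝ W) :=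
    FiniteDimensional.fintypeBasisIndex (Module.Basis.ofVectorSpace ℝ W)
  have hF : F = fun x => ∑ I : Module.Basis.ofVectorSpaceIndex ℝ W,
      (Module.Basis.ofVectorSpace ℝ W).coord I (F x) • Module.Basis.ofVectorSpace ℝ W I := by
    funext x
    exact ((Module.Basis.ofVectorSpace ℝ W).sum_repr (F x)).symm
  rw [hF]
  exact ContDiffOn.sum fun I _ => (h I).smul contDiffOn_const

end Normed



lemma face_change {n : ℕ} (a b : Fin (n+1) → ℝ) (i : Fin (n+1)) (c : ℝ)
    (H : (Fin (n+1) → ℝ) → ℝ) :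
    (∫ x' in Set.Icc (fun j : {j : Fin (n+1) // j ≠ i} => a j.1) (fun j => b j.1),
        H (fun j => if h : j = i then c else x' ⟨j, h⟩))
      = ∫ y in Set.Icc (a ∘ i.succAbove) (b ∘ i.succAbove), H (i.insertNth c y) := by
  set κ := finSuccAboveEquiv i with hκ
  set T := MeasurableEquiv.piCongrLeft (fun _ : {j : Fin (n+1) // j ≠ i} => ℝ) κ with hT
  have hTval : ∀ (y : Fin n → ℝ) (k : Fin n), T y (κ k) = y k := by
    intro y k
    rw [hT, MeasurableEquiv.piCongrLeft_apply_apply]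
  have hκval : ∀ k : Fin n, (κ k : Fin (n+1)) = i.succAbove k := by
    intro k; rw [hκ, finSuccAboveEquiv_apply]
  have hMP : MeasurePreserving T volume volume :=
    volume_measurePreserving_piCongrLeft _ κ
  have hpre : T ⁻¹' (Set.Icc (fun j : {j : Fin (n+1) // j ≠ i} => a j.1) (fun j => b j.1))
      = Set.Icc (a ∘ i.succAbove) (b ∘ i.succAbove) := by
    ext y
    simp only [Set.mem_preimage, Set.mem_Icc, Pi.le_def, Function.comp_apply]
    constructor
    · rintro ⟨h1, h2⟩
      exact ⟨fun k => by have := h1 (κ k); rwa [hTval, hκval] at this,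
        fun k => by have := h2 (κ k); rwa [hTval, hκval] at this⟩
    · rintro ⟨h1, h2⟩
      constructor
      · intro j
        obtain ⟨k, rfl⟩ := κ.surjective j
        rw [hTval, hκval]
        exact h1 k
      · intro j
        obtain ⟨k, rfl⟩ := κ.surjective j
        rw [hTval, hκval]
        exact h2 k
  have hemb : ∀ y : Fin n → ℝ,
      (fun j => if h : j = i then c else T y ⟨j, h⟩) = i.insertNth c y := by
    intro y
    funext j
    rcases eq_or_ne j i with rfl | hj
    · rw [dif_pos rfl, Fin.insertNth_apply_same]
    · rw [dif_neg hj]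
      obtain ⟨k, hk⟩ := Fin.exists_succAbove_eq hj
      have h1 : (⟨j, hj⟩ : {j : Fin (n+1) // j ≠ i}) = κ k := by
        apply Subtype.ext
        rw [hκval, hk]
      rw [h1, hTval, ← hk, Fin.insertNth_apply_succAbove]
  have key := hMP.setIntegral_preimage_emb T.measurableEmbedding
    (fun x' => H (fun j => if h : j = i then c else x' ⟨j, h⟩))
    (Set.Icc (fun j : {j : Fin (n+1) // j ≠ i} => a j.1) (fun j => b j.1))
  rw [← key, hpre]
  apply setIntegral_congr_fun (measurableSet_Icc)
  intro y _
  simp only [hemb]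


/-- The bilinear form u, w ↦ coord I (u * e i * w). -/
def bform {m : ℕ} (I : Module.Basis.ofVectorSpaceIndex ℝ (Cl m)) (i : Fin m) :
    Cl m →ₗ[ℝ] Cl m →ₗ[ℝ] ℝ :=
  LinearMap.mk₂ ℝ (fun u w => (Module.Basis.ofVectorSpace ℝ (Cl m)).coord I (u * e i * w))
    (fun u u' w => by simp [add_mul])
    (fun c u w => by simp [smul_mul_assoc])
    (fun u w w' => by simp [mul_add])
    (fun c u w => by simp [mul_smul_comm])


set_option maxHeartbeats 1000000 in
theorem bosonic_stokes {m : ℕ}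
    (Ω : Set (Fin m → ℝ)) (hΩ : IsOpen Ω)
    (a b : Fin m → ℝ) (hab : a ≤ b) (hK : Set.Icc a b ⊆ Ω)
    (f g : (Fin m → ℝ) → Cl m) (hf : C1On f Ω) (hg : C1On g Ω) :
    ∑ i : Fin m,
        (faceInt a b i (b i) (fun x => f x * e i * g x) -
          faceInt a b i (a i) (fun x => f x * e i * g x)) =
      vInt volume (Set.Icc a b) (fun x => rightDb f x * g x + f x * leftDb g x) := by
  obtain _ | n := m
  · -- m = 0 : both sides are trivial
    have h0 : (fun x : Fin 0 → ℝ => rightDb f x * g x + f x * leftDb g x) = fun _ => 0 := by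
      funext x
      simp [rightDb, leftDb]
    rw [h0]
    simp [vInt]
  -- m = n + 1
  haveI : Fintype (Module.Basis.ofVectorSpaceIndex ℝ (Cl (n+1))) :=
    FiniteDimensional.fintypeBasisIndex (Module.Basis.ofVectorSpace ℝ (Cl (n+1)))
  letI : NormedAddCommGroup (Cl (n+1)) :=
    NormedAddCommGroup.induced (Cl (n+1)) ((Module.Basis.ofVectorSpaceIndex ℝ (Cl (n+1))) → ℝ)
      ((Module.Basis.ofVectorSpace ℝ (Cl (n+1))).equivFun.toLinearMap)
      (Module.Basis.ofVectorSpace ℝ (Cl (n+1))).equivFun.injective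
  letI : NormedSpace ℝ (Cl (n+1)) :=
    NormedSpace.induced ℝ (Cl (n+1)) ((Module.Basis.ofVectorSpaceIndex ℝ (Cl (n+1))) → ℝ)
      ((Module.Basis.ofVectorSpace ℝ (Cl (n+1))).equivFun.toLinearMap)
  set B := Module.Basis.ofVectorSpace ℝ (Cl (n+1)) with hB
  -- C¹ and derivative facts
  have hfC : ContDiffOn ℝ 1 f Ω := C1On.contDiffOn hf
  have hgC : ContDiffOn ℝ 1 g Ω := C1On.contDiffOn hg
  have hfd : ∀ x ∈ Ω, HasFDerivAt f (fderiv ℝ f x) x := fun x hx =>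
    ((hfC.contDiffAt (hΩ.mem_nhds hx)).differentiableAt one_ne_zero).hasFDerivAt
  have hgd : ∀ x ∈ Ω, HasFDerivAt g (fderiv ℝ g x) x := fun x hx =>
    ((hgC.contDiffAt (hΩ.mem_nhds hx)).differentiableAt one_ne_zero).hasFDerivAt
  have hfdc : ContinuousOn (fderiv ℝ f) Ω := hfC.continuousOn_fderiv_of_isOpen hΩ le_rfl
  have hgdc : ContinuousOn (fderiv ℝ g) Ω := hgC.continuousOn_fderiv_of_isOpen hΩ le_rfl
  -- prove coordinatewise
  apply B.ext_elem
  intro I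
  -- the bounded bilinear maps
  let L : Fin (n+1) → Cl (n+1) →L[ℝ] Cl (n+1) →L[ℝ] ℝ := fun i =>
    LinearMap.toContinuousLinearMap
      ((LinearMap.toContinuousLinearMap :
          (Cl (n+1) →ₗ[ℝ] ℝ) ≃ₗ[ℝ] (Cl (n+1) →L[ℝ] ℝ)).toLinearMap.comp (bform I i))
  have hL : ∀ i u w, L i u w = B.coord I (u * e i * w) := by
    intro i u w
    simp only [L, LinearMap.coe_toContinuousLinearMap', LinearMap.coe_comp,
      Function.comp_apply, LinearEquiv.coe_coe, LinearMap.mk₂_apply, bform, hB]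
  -- the vector field and its derivative
  set Φ : (Fin (n+1) → ℝ) → (Fin (n+1) → ℝ) :=
    fun x i => B.coord I (f x * e i * g x) with hΦ
  set Φ' : (Fin (n+1) → ℝ) → ((Fin (n+1) → ℝ) →L[ℝ] (Fin (n+1) → ℝ)) :=
    fun x => ContinuousLinearMap.pi fun i =>
      ((L i).isBoundedBilinearMap.deriv (f x, g x)).comp
        ((fderiv ℝ f x).prod (fderiv ℝ g x)) with hΦ'
  have hΦd : ∀ x ∈ Ω, HasFDerivAt Φ (Φ' x) x := by
    intro x hx
    apply hasFDerivAt_pi''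
    intro i
    rw [hΦ', ContinuousLinearMap.proj_pi]
    have hcomp : (fun x => Φ x i)
        = (fun p : Cl (n+1) × Cl (n+1) => L i p.1 p.2) ∘ (fun x => (f x, g x)) :=
      funext fun x => (hL i (f x) (g x)).symm
    rw [hΦ, hcomp]
    exact ((L i).isBoundedBilinearMap.hasFDerivAt (f x, g x)).comp x
      ((hfd x hx).prodMk (hgd x hx))
  -- the divergence identity
  have hdiv : ∀ x ∈ Ω, (∑ i, Φ' x (Pi.single i 1) i)
      = B.coord I (rightDb f x * g x + f x * leftDb g x) := by
    intro x hx
    have h1 : ∀ i, Φ' x (Pi.single i 1) i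
        = B.coord I (f x * e i * pd i g x) + B.coord I (pd i f x * e i * g x) := by
      intro i
      rw [hΦ']
      rw [ContinuousLinearMap.pi_apply, ContinuousLinearMap.comp_apply,
        ContinuousLinearMap.prod_apply, IsBoundedBilinearMap.deriv_apply]
      rw [pd_eq_fderiv (hfd x hx) i, pd_eq_fderiv (hgd x hx) i, hL, hL]
    rw [Finset.sum_congr rfl fun i _ => h1 i]
    rw [Finset.sum_add_distrib, ← map_sum, ← map_sum, ← map_add]
    congr 1
    rw [rightDb, leftDb, Finset.sum_mul, Finset.mul_sum]
    rw [add_comm (∑ j : Fin (n+1), f x * e j * pd j g x)]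
    congr 1
    exact Finset.sum_congr rfl fun j _ => mul_assoc _ _ _
  -- continuity of Φ on the box
  have hfcK : ContinuousOn f (Set.Icc a b) := hfC.continuousOn.mono hK
  have hgcK : ContinuousOn g (Set.Icc a b) := hgC.continuousOn.mono hK
  have HC : ContinuousOn Φ (Set.Icc a b) := by
    apply continuousOn_pi.2
    intro i
    have hcomp : (fun x => Φ x i)
        = (fun p : Cl (n+1) × Cl (n+1) => L i p.1 p.2) ∘ (fun x => (f x, g x)) :=
      funext fun x => (hL i (f x) (g x)).symm
    rw [hΦ, hcomp]
    exact (L i).isBoundedBilinearMap.continuous.comp_continuousOn (hfcK.prodMk hgcK)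
  -- differentiability on the interior
  have Hd : ∀ x ∈ (Set.pi Set.univ fun i => Set.Ioo (a i) (b i)) \ (∅ : Set _),
      HasFDerivAt Φ (Φ' x) x := by
    rintro x ⟨hx, -⟩
    apply hΦd
    apply hK
    exact ⟨fun i => (hx i (Set.mem_univ i)).1.le, fun i => (hx i (Set.mem_univ i)).2.le⟩
  -- integrability of the divergence
  have HdivCont : ContinuousOn (fun x => ∑ i, Φ' x (Pi.single i 1) i) (Set.Icc a b) := by
    have heq : (fun x => ∑ i, Φ' x (Pi.single i 1) i)
        = fun x => ∑ i, (L i (f x) (fderiv ℝ g x (Pi.single i 1))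
            + L i (fderiv ℝ f x (Pi.single i 1)) (g x)) := by
      funext x
      refine Finset.sum_congr rfl fun i _ => ?_
      rw [hΦ', ContinuousLinearMap.pi_apply, ContinuousLinearMap.comp_apply,
        ContinuousLinearMap.prod_apply, IsBoundedBilinearMap.deriv_apply]
    rw [heq]
    apply continuousOn_finset_sum
    intro i _
    apply ContinuousOn.add
    · have hcomp : (fun x => L i (f x) (fderiv ℝ g x (Pi.single i 1)))
          = (fun p : Cl (n+1) × Cl (n+1) => L i p.1 p.2) ∘
            (fun x => (f x, fderiv ℝ g x (Pi.single i 1))) := rfl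
      rw [hcomp]
      exact (L i).isBoundedBilinearMap.continuous.comp_continuousOn
        (hfcK.prodMk ((hgdc.mono hK).clm_apply continuousOn_const))
    · have hcomp : (fun x => L i (fderiv ℝ f x (Pi.single i 1)) (g x))
          = (fun p : Cl (n+1) × Cl (n+1) => L i p.1 p.2) ∘
            (fun x => (fderiv ℝ f x (Pi.single i 1), g x)) := rfl
      rw [hcomp]
      exact (L i).isBoundedBilinearMap.continuous.comp_continuousOn
        (((hfdc.mono hK).clm_apply continuousOn_const).prodMk hgcK)
  have Hi : IntegrableOn (fun x => ∑ i, Φ' x (Pi.single i 1) i) (Set.Icc a b) volume :=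
    HdivCont.integrableOn_compact isCompact_Icc
  -- apply the divergence theorem
  have main := integral_divergence_of_hasFDerivAt_off_countable a b hab Φ Φ'
    ∅ Set.countable_empty HC Hd Hi
  -- now identify both sides
  rw [← Module.Basis.coord_apply, ← Module.Basis.coord_apply, map_sum]
  have hface : ∀ (i : Fin (n+1)) (c : ℝ),
      B.coord I (faceInt a b i c (fun x => f x * e i * g x))
        = ∫ y in Set.Icc (a ∘ i.succAbove) (b ∘ i.succAbove), Φ (i.insertNth c y) i := by
    intro i c
    rw [coord_faceInt]
    exact face_change a b i c (fun x => B.coord I (f x * e i * g x))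
  calc ∑ i : Fin (n+1), B.coord I (faceInt a b i (b i) (fun x => f x * e i * g x) -
        faceInt a b i (a i) (fun x => f x * e i * g x))
      = ∑ i : Fin (n+1), ((∫ y in Set.Icc (a ∘ i.succAbove) (b ∘ i.succAbove),
          Φ (i.insertNth (b i) y) i)
        - ∫ y in Set.Icc (a ∘ i.succAbove) (b ∘ i.succAbove), Φ (i.insertNth (a i) y) i) := by
        refine Finset.sum_congr rfl fun i _ => ?_
        rw [map_sub, hface, hface]
    _ = ∫ x in Set.Icc a b, ∑ i, Φ' x (Pi.single i 1) i := main.symm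
    _ = ∫ x in Set.Icc a b, B.coord I (rightDb f x * g x + f x * leftDb g x) := by
        apply setIntegral_congr_fun measurableSet_Icc
        intro x hx
        exact hdiv x (hK hx)
    _ = B.coord I (vInt volume (Set.Icc a b)
          (fun x => rightDb f x * g x + f x * leftDb g x)) := (coord_vInt _ _ _ I).symm


end BosonicStokes
end
end

section
/- For all integers 0 ≤ k ≤ n and every R ∈ Λ_{2n} homogeneous of exterior degree 2n−2k, Δ_f^n( (θ²)^k·R ) = (−1)^k·4^k·(n!·k!/(n−k)!)·Δ_f^{n−k}R. (In the language of the paper: in the purely fermionic case, ∂_ẋ^{2n}(ẋ^{2k} R_{2n−2k}) = c(n,k)·∂_ẋ^{2n−2k}(R_{2n−2k}) with c(n,k) = (−1)^k 4^k n! k!/(n−k)!, since ẋ^{2k} = (θ²)^k and the square of the fermionic Dirac operator is Δ_f.) -/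
/-!
STATEMENT 10: For all integers 0 ≤ k ≤ n and every R ∈ Λ_{2n} homogeneous of exterior
degree 2n−2k, Δ_f^n((θ²)^k · R) = (−1)^k·4^k·(n!·k!/(n−k)!)·Δ_f^{n−k} R.
-/

noncomputable section

namespace SuperCauchy

/-- The Grassmann algebra Λ_{2n}, realized as the exterior algebra on 2n generators. -/
abbrev Λ (n : ℕ) : Type := ExteriorAlgebra ℝ (Fin (2*n) → ℝ)

/-- The Grassmann generator θ_j (0-based index j corresponds to θ_{j+1}). -/
def θ {n : ℕ} (j : Fin (2*n)) : Λ n := ExteriorAlgebra.ι ℝ (Pi.single j 1)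

/-- The odd left derivation ∂_{θ_j}: left contraction with the j-th dual basis vector. -/
def dθ {n : ℕ} (j : Fin (2*n)) : Λ n →ₗ[ℝ] Λ n :=
  CliffordAlgebra.contractLeft (LinearMap.proj j)

/-- The 0-based index of θ_{2j-1} (1-based), for j = 1,…,n. -/
def e2 {n : ℕ} (j : Fin n) : Fin (2*n) := ⟨2*j.val, by omega⟩
/-- The 0-based index of θ_{2j} (1-based), for j = 1,…,n. -/
def o2 {n : ℕ} (j : Fin n) : Fin (2*n) := ⟨2*j.val+1, by omega⟩

/-- The fermionic Laplacian Δ_f = 4 Σ_{j=1}^n ∂_{θ_{2j-1}} ∂_{θ_{2j}}. -/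
def Δf (n : ℕ) : Λ n →ₗ[ℝ] Λ n :=
  (4:ℝ) • ∑ j : Fin n, dθ (e2 j) ∘ₗ dθ (o2 j)

/-- θ² = Σ_{j=1}^n θ_{2j-1} θ_{2j}. -/
def θsq (n : ℕ) : Λ n := ∑ j : Fin n, θ (e2 j) * θ (o2 j)

/-- The d-th exterior power of Λ_{2n}: the elements homogeneous of exterior degree d. -/
def grade (n d : ℕ) : Submodule ℝ (Λ n) :=
  LinearMap.range (ExteriorAlgebra.ι ℝ : (Fin (2*n) → ℝ) →ₗ[ℝ] Λ n) ^ d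

-- basics
variable {n : ℕ}

lemma dθ_ι_mul (j : Fin (2*n)) (v : Fin (2*n) → ℝ) (x : Λ n) :
    dθ j (ExteriorAlgebra.ι ℝ v * x) = v j • x - ExteriorAlgebra.ι ℝ v * dθ j x :=
  CliffordAlgebra.contractLeft_ι_mul _ _ _

lemma dθ_θ_mul (j m : Fin (2*n)) (x : Λ n) :
    dθ j (θ m * x) = (if j = m then (1:ℝ) else 0) • x - θ m * dθ j x := by
  rw [θ, dθ_ι_mul, Pi.single_apply]

lemma dθ_algebraMap (j : Fin (2*n)) (r : ℝ) :
    dθ j (algebraMap ℝ (Λ n) r) = 0 :=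
  CliffordAlgebra.contractLeft_algebraMap _ _ _

lemma mem_grade_zero {x : Λ n} (h : x ∈ grade n 0) : ∃ r : ℝ, algebraMap ℝ (Λ n) r = x := by
  rw [grade, pow_zero] at h
  exact Submodule.mem_one.mp h

lemma dθ_grade_zero (j : Fin (2*n)) {x : Λ n} (h : x ∈ grade n 0) : dθ j x = 0 := by
  obtain ⟨r, rfl⟩ := mem_grade_zero h
  exact dθ_algebraMap j r

lemma grade_induction (d : ℕ) {P : Λ n → Prop} 
    (hmul : ∀ (v : Fin (2*n) → ℝ) (y : Λ n), y ∈ grade n d → P (ExteriorAlgebra.ι ℝ v * y))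
    (hadd : ∀ x y, P x → P y → P (x + y)) :
    ∀ x ∈ grade n (d+1), P x := by
  intro x hx
  rw [grade, pow_succ'] at hx
  refine Submodule.mul_induction_on hx ?_ hadd
  rintro a ⟨v, rfl⟩ b hb
  exact hmul v b hb

lemma ι_mem_grade_one (v : Fin (2*n) → ℝ) : ExteriorAlgebra.ι ℝ v ∈ grade n 1 := by
  rw [grade, pow_one]; exact ⟨v, rfl⟩

lemma mul_mem_grade {a b : Λ n} {c d : ℕ} (ha : a ∈ grade n c) (hb : b ∈ grade n d) :
    a * b ∈ grade n (c + d) := by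
  rw [grade, pow_add]
  exact Submodule.mul_mem_mul ha hb

lemma dθ_mem_grade (j : Fin (2*n)) : ∀ d : ℕ, ∀ x ∈ grade n (d+1), dθ j x ∈ grade n d := by
  intro d
  induction d with
  | zero =>
    refine grade_induction 0 ?_ ?_
    · intro v y hy
      rw [dθ_ι_mul, dθ_grade_zero j hy, mul_zero, sub_zero]
      exact Submodule.smul_mem _ _ hy
    · intro x y hx hy
      rw [map_add]; exact add_mem hx hy
  | succ d ih =>
    refine grade_induction (d+1) ?_ ?_
    · intro v y hy
      rw [dθ_ι_mul]
      refine sub_mem (Submodule.smul_mem _ _ hy) ?_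
      have := mul_mem_grade (ι_mem_grade_one v) (ih y hy)
      rwa [Nat.add_comm] at this
    · intro x y hx hy
      rw [map_add]; exact add_mem hx hy

def Dop (n : ℕ) : Λ n →ₗ[ℝ] Λ n := ∑ j : Fin n, dθ (e2 j) ∘ₗ dθ (o2 j)

lemma Δf_eq (n : ℕ) : Δf n = (4:ℝ) • Dop n := rfl

def Nop (n : ℕ) : Λ n →ₗ[ℝ] Λ n := ∑ m : Fin (2*n), LinearMap.mulLeft ℝ (θ m) ∘ₗ dθ m

lemma sum_pair {M : Type*} [AddCommMonoid M] (F : Fin (2*n) → M) :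
    ∑ m, F m = ∑ j : Fin n, (F (e2 j) + F (o2 j)) := by
  have hbij : Function.Bijective (fun p : Fin n × Fin 2 => 
      (⟨2*p.1.val + p.2.val, by omega⟩ : Fin (2*n))) := by
    rw [Fintype.bijective_iff_injective_and_card]
    constructor
    · rintro ⟨a, b⟩ ⟨c, d⟩ h
      simp only [Fin.mk.injEq] at h
      have hb := b.isLt; have hd := d.isLt
      have : a.val = c.val ∧ b.val = d.val := by omega
      exact Prod.ext (Fin.ext this.1) (Fin.ext this.2)
    · simp [Fintype.card_prod, Nat.mul_comm]
  rw [← Fintype.sum_bijective _ hbij _ F (fun _ => rfl)]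
  rw [Fintype.sum_prod_type]
  refine Finset.sum_congr rfl fun j _ => ?_
  rw [Fin.sum_univ_two]
  have h0 : ∀ m m' : Fin (2*n), m = m' → F m = F m' := fun _ _ h => h ▸ rfl
  exact congrArg₂ (· + ·) (h0 _ _ (Fin.ext (by simp [e2]))) (h0 _ _ (Fin.ext (by simp [o2])))

lemma θ_anticomm (a b : Fin (2*n)) : θ a * θ b = -(θ b * θ a) := by
  have := ExteriorAlgebra.ι_add_mul_swap (R := ℝ) (M := Fin (2*n) → ℝ) (Pi.single a (1:ℝ)) (Pi.single b 1)
  rw [θ, θ]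
  linear_combination (norm := noncomm_ring) this

lemma θ_mul_ι (m : Fin (2*n)) (v : Fin (2*n) → ℝ) :
    θ m * ExteriorAlgebra.ι ℝ v = -(ExteriorAlgebra.ι ℝ v * θ m) := by
  have := ExteriorAlgebra.ι_add_mul_swap (R := ℝ) (Pi.single m (1:ℝ)) v
  rw [θ]; linear_combination (norm := noncomm_ring) this

lemma Nop_apply (x : Λ n) : Nop n x = ∑ m, θ m * dθ m x := by
  simp [Nop, LinearMap.sum_apply]

lemma Nop_grade : ∀ d : ℕ, ∀ x ∈ grade n d, Nop n x = (d : ℝ) • x := by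
  intro d
  induction d with
  | zero =>
    intro x hx
    obtain ⟨r, rfl⟩ := mem_grade_zero hx
    rw [Nop_apply]
    simp [dθ_algebraMap]
  | succ d ih =>
    refine grade_induction d ?_ ?_
    · intro v y hy
      rw [Nop_apply]
      have step : ∀ m : Fin (2*n), θ m * dθ m (ExteriorAlgebra.ι ℝ v * y)
          = v m • (θ m * y) + ExteriorAlgebra.ι ℝ v * (θ m * dθ m y) := by
        intro m
        rw [dθ_ι_mul, mul_sub, mul_smul_comm, ← mul_assoc, θ_mul_ι, neg_mul, mul_assoc,
          sub_neg_eq_add]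
      rw [Finset.sum_congr rfl fun m _ => step m, Finset.sum_add_distrib]
      have h1 : ∑ m : Fin (2*n), v m • (θ m * y) = ExteriorAlgebra.ι ℝ v * y := by
        have : ∀ m : Fin (2*n), v m • (θ m * y) = (v m • θ m) * y := fun m => 
          (smul_mul_assoc _ _ _).symm
        rw [Finset.sum_congr rfl fun m _ => this m, ← Finset.sum_mul]
        congr 1
        have : ∀ m : Fin (2*n), v m • θ m = ExteriorAlgebra.ι ℝ (Pi.single m (v m)) := by
          intro m
          rw [θ, ← map_smul]
          congr 1
          ext i
          rw [Pi.smul_apply, Pi.single_apply, Pi.single_apply]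
          split <;> simp
        rw [Finset.sum_congr rfl fun m _ => this m, ← map_sum]
        congr 1
        exact Finset.univ_sum_single v
      have h2 : ∑ m : Fin (2*n), ExteriorAlgebra.ι ℝ v * (θ m * dθ m y)
          = (d:ℝ) • (ExteriorAlgebra.ι ℝ v * y) := by
        rw [← Finset.mul_sum, ← Nop_apply, ih y hy, mul_smul_comm]
      rw [h1, h2]
      push_cast
      rw [add_smul, one_smul]
      abel
    · intro x y hx hy
      rw [map_add, smul_add, hx, hy]

lemma Dop_apply (x : Λ n) : Dop n x = ∑ j : Fin n, dθ (e2 j) (dθ (o2 j) x) := by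
  simp [Dop, LinearMap.sum_apply]

lemma o2_ne_e2' (i j : Fin n) : ((o2 i = e2 j) = False) := by
  simp only [eq_iff_iff, iff_false]
  intro h
  have := congrArg Fin.val h
  simp [o2, e2] at this
  omega

lemma e2_ne_o2' (i j : Fin n) : ((e2 i = o2 j) = False) := by
  simp only [eq_iff_iff, iff_false]
  intro h
  have := congrArg Fin.val h
  simp [o2, e2] at this
  omega

lemma o2_eq_o2' (i j : Fin n) : ((o2 i = o2 j) = (i = j)) := by
  simp only [eq_iff_iff]
  constructor
  · intro h
    have := congrArg Fin.val h
    simp only [o2] at this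
    exact Fin.ext (by omega)
  · rintro rfl; rfl

lemma e2_eq_e2' (i j : Fin n) : ((e2 i = e2 j) = (i = j)) := by
  simp only [eq_iff_iff]
  constructor
  · intro h
    have := congrArg Fin.val h
    simp only [e2] at this
    exact Fin.ext (by omega)
  · rintro rfl; rfl

lemma key (i j : Fin n) (x : Λ n) :
    dθ (e2 i) (dθ (o2 i) (θ (e2 j) * (θ (o2 j) * x))) =
      (if i = j then (-x + θ (e2 j) * dθ (e2 j) x + θ (o2 j) * dθ (o2 j) x) else 0)
        + θ (e2 j) * (θ (o2 j) * dθ (e2 i) (dθ (o2 i) x)) := by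
  by_cases h : i = j
  · subst h
    simp only [dθ_θ_mul, o2_ne_e2', e2_ne_o2', o2_eq_o2', e2_eq_e2', if_false, eq_self_iff_true, if_true,
      zero_smul, zero_sub, one_smul, map_neg, map_sub, map_smul, mul_sub, mul_neg,
      mul_smul_comm, smul_sub, smul_neg]
    module
  · simp only [dθ_θ_mul, o2_ne_e2', e2_ne_o2', o2_eq_o2', e2_eq_e2', if_false, if_neg h,
      zero_smul, zero_sub, one_smul, map_neg, map_sub, map_smul, mul_sub, mul_neg,
      mul_smul_comm, smul_sub, smul_neg, zero_add]
    module

lemma Dop_θsq_mul {d : ℕ} {x : Λ n} (hx : x ∈ grade n d) :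
    Dop n (θsq n * x) = ((d:ℝ) - (n:ℝ)) • x + θsq n * Dop n x := by
  have expand : θsq n * x = ∑ j : Fin n, θ (e2 j) * (θ (o2 j) * x) := by
    rw [θsq, Finset.sum_mul]
    exact Finset.sum_congr rfl fun j _ => mul_assoc _ _ _
  rw [expand, map_sum]
  have hterm : ∀ j : Fin n, Dop n (θ (e2 j) * (θ (o2 j) * x)) =
      ∑ i : Fin n, dθ (e2 i) (dθ (o2 i) (θ (e2 j) * (θ (o2 j) * x))) := fun j => Dop_apply _
  rw [Finset.sum_congr rfl fun j _ => hterm j]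
  rw [Finset.sum_congr rfl fun j _ => Finset.sum_congr rfl fun i _ => key i j x]
  rw [Finset.sum_congr rfl fun j _ => Finset.sum_add_distrib, Finset.sum_add_distrib]
  have h1 : ∑ j : Fin n, ∑ i : Fin n,
      (if i = j then (-x + θ (e2 j) * dθ (e2 j) x + θ (o2 j) * dθ (o2 j) x) else 0)
      = ((d:ℝ) - (n:ℝ)) • x := by
    have hinner : ∀ j : Fin n, (∑ i : Fin n,
        (if i = j then (-x + θ (e2 j) * dθ (e2 j) x + θ (o2 j) * dθ (o2 j) x) else 0))
        = -x + θ (e2 j) * dθ (e2 j) x + θ (o2 j) * dθ (o2 j) x := by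
      intro j
      rw [Finset.sum_ite_eq' Finset.univ j]
      simp
    rw [Finset.sum_congr rfl fun j _ => hinner j]
    have : ∀ j : Fin n, -x + θ (e2 j) * dθ (e2 j) x + θ (o2 j) * dθ (o2 j) x
        = -x + (θ (e2 j) * dθ (e2 j) x + θ (o2 j) * dθ (o2 j) x) := fun j => by abel
    rw [Finset.sum_congr rfl fun j _ => this j, Finset.sum_add_distrib]
    rw [← sum_pair (fun m => θ m * dθ m x), ← Nop_apply, Nop_grade d x hx]
    rw [Finset.sum_const, Finset.card_univ, Fintype.card_fin]
    rw [sub_smul]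
    rw [← Nat.cast_smul_eq_nsmul ℝ n (-x)]
    module
  have h2 : ∑ j : Fin n, ∑ i : Fin n, θ (e2 j) * (θ (o2 j) * dθ (e2 i) (dθ (o2 i) x))
      = θsq n * Dop n x := by
    have hinner : ∀ j : Fin n, ∑ i : Fin n, θ (e2 j) * (θ (o2 j) * dθ (e2 i) (dθ (o2 i) x))
        = θ (e2 j) * θ (o2 j) * Dop n x := by
      intro j
      rw [← Finset.mul_sum, ← Finset.mul_sum, ← Dop_apply, mul_assoc]
    rw [Finset.sum_congr rfl fun j _ => hinner j, ← Finset.sum_mul, θsq]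
  rw [h1, h2]

lemma θsq_mem : θsq n ∈ grade n 2 := by
  rw [θsq]
  refine Submodule.sum_mem _ fun j _ => ?_
  have := mul_mem_grade (ι_mem_grade_one (n := n) (Pi.single (e2 j) 1))
    (ι_mem_grade_one (n := n) (Pi.single (o2 j) 1))
  simpa [θ] using this

lemma θsq_pow_mem (k : ℕ) : θsq n ^ k ∈ grade n (2*k) := by
  have h : grade n (2*k) = (grade n 2) ^ k := by
    rw [grade, grade, ← pow_mul]
  rw [h]
  exact Submodule.pow_mem_pow _ θsq_mem k

lemma θsq_pow_mul_mem (k : ℕ) {d : ℕ} {x : Λ n} (hx : x ∈ grade n d) :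
    θsq n ^ k * x ∈ grade n (2*k + d) :=
  mul_mem_grade (θsq_pow_mem k) hx

lemma Dop_mem_grade {d : ℕ} {x : Λ n} (hx : x ∈ grade n (d+2)) : Dop n x ∈ grade n d := by
  rw [Dop_apply]
  exact Submodule.sum_mem _ fun j _ => dθ_mem_grade _ d _ (dθ_mem_grade _ (d+1) x hx)

lemma Dop_grade_zero {x : Λ n} (hx : x ∈ grade n 0) : Dop n x = 0 := by
  rw [Dop_apply]
  simp [dθ_grade_zero _ hx]

lemma Dop_θsq_pow_mul (k : ℕ) {d : ℕ} {x : Λ n} (hx : x ∈ grade n d) :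
    Dop n (θsq n ^ k * x) = θsq n ^ k * Dop n x
      + (((k:ℕ):ℝ) * (((d:ℕ):ℝ) + ((k:ℕ):ℝ) - 1 - ((n:ℕ):ℝ))) • (θsq n ^ (k-1) * x) := by
  induction k with
  | zero => simp
  | succ k ih =>
    have hmem : θsq n ^ k * x ∈ grade n (2*k + d) := θsq_pow_mul_mem k hx
    have hk : ∀ (e : ℝ), (((k:ℕ):ℝ)*e) • (θsq n * (θsq n ^ (k-1) * x))
        = (((k:ℕ):ℝ)*e) • (θsq n ^ k * x) := by
      cases k with
      | zero => simp
      | succ m =>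
        intro e
        rw [Nat.add_sub_cancel, ← mul_assoc, ← pow_succ']
    rw [pow_succ' (θsq n) k, mul_assoc, Dop_θsq_mul hmem, ih, mul_add, mul_smul_comm,
      ← mul_assoc (θsq n) (θsq n ^ k), ← pow_succ', hk, Nat.add_sub_cancel]
    push_cast
    module

/-- The structure constant. -/
def Ac (n m k : ℕ) : ℝ := (-1)^k * (m.descFactorial k : ℝ) * (((n - m + 1).ascFactorial k : ℝ))

lemma Ac_rec {m k : ℕ} (hk : k ≤ m) (hm : m < n) :
    Ac n (m+1) (k+1) = Ac n m (k+1)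
      + ((((k+1):ℕ):ℝ) * (((2*(m-k):ℕ):ℝ) + (((k+1):ℕ):ℝ) - 1 - ((n:ℕ):ℝ))) * Ac n m k := by
  have hmn : m ≤ n := hm.le
  have h1 : n - (m+1) + 1 = n - m := by omega
  have h2 : (n - m).ascFactorial (k+1) = (n - m) * ((n - m)+1).ascFactorial k := by
    rw [Nat.ascFactorial_succ, ← Nat.succ_ascFactorial]
  rw [Ac, Ac, Ac, h1, h2, Nat.succ_descFactorial_succ, Nat.descFactorial_succ,
    Nat.ascFactorial_succ]
  push_cast [Nat.cast_sub hk, Nat.cast_sub hmn]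
  ring

lemma Ac_self_succ (m k : ℕ) (h : m < k) : Ac n m k = 0 := by
  rw [Ac, Nat.descFactorial_of_lt h]
  simp

lemma Dop_pow : ∀ m : ℕ, m ≤ n → ∀ k, k ≤ m → ∀ x ∈ grade n (2*(m-k)),
    (Dop n ^ m) (θsq n ^ k * x) = Ac n m k • (Dop n ^ (m-k)) x := by
  intro m
  induction m with
  | zero =>
    intro _ k hk x hx
    have : k = 0 := Nat.le_zero.mp hk
    subst this
    simp [Ac]
  | succ m ih =>
    intro hm k hk x hx
    cases k with
    | zero => simp [Ac]
    | succ k =>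
      have hk' : k ≤ m := by omega
      have hm' : m ≤ n := by omega
      have hmn : m < n := by omega
      have hx' : x ∈ grade n (2*(m-k)) := by
        have h : 2*((m+1)-(k+1)) = 2*(m-k) := by omega
        rwa [h] at hx
      rw [pow_succ, Module.End.mul_apply, Dop_θsq_pow_mul (k+1) hx', Nat.add_sub_cancel,
        map_add, map_smul, ih hm' k hk' x hx']
      have hterm1 : (Dop n ^ m) (θsq n ^ (k+1) * Dop n x)
          = Ac n m (k+1) • (Dop n ^ (m - k)) x := by
        rcases Nat.lt_or_ge k m with hlt | hge
        · have hgr : x ∈ grade n (2*(m-(k+1)) + 2) := by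
            have h : 2*(m-k) = 2*(m-(k+1)) + 2 := by omega
            rwa [h] at hx'
          have hDx : Dop n x ∈ grade n (2*(m-(k+1))) := Dop_mem_grade hgr
          have hcomp : (Dop n ^ (m-(k+1))) (Dop n x) = (Dop n ^ (m - k)) x := by
            rw [← Module.End.mul_apply, ← pow_succ, show m-(k+1)+1 = m-k by omega]
          rw [ih hm' (k+1) hlt (Dop n x) hDx, hcomp]
        · have hkm : k = m := le_antisymm hk' hge
          subst hkm
          have h0 : x ∈ grade n 0 := by simpa using hx'
          rw [Dop_grade_zero h0, mul_zero, map_zero, Ac_self_succ k (k+1) (by omega),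
            zero_smul]
      rw [hterm1]
      have hms : (m+1) - (k+1) = m - k := by omega
      rw [hms, smul_smul, ← add_smul]
      congr 1
      rw [Ac_rec hk' hmn]


theorem pow_fermionicLaplacian_thetaSq_pow_mul
    (n k : ℕ) (hk : k ≤ n) (R : Λ n) (hR : R ∈ grade n (2*n - 2*k)) :
    ((Δf n) ^ n : Λ n →ₗ[ℝ] Λ n) ((θsq n)^k * R) =
      ((-1:ℝ)^k * 4^k * ((n.factorial : ℝ) * (k.factorial : ℝ) / ((n-k).factorial : ℝ))) •
        (((Δf n) ^ (n-k) : Λ n →ₗ[ℝ] Λ n) R) := by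
  have h2 : 2*n - 2*k = 2*(n-k) := by omega
  rw [h2] at hR
  have hG := Dop_pow n le_rfl k hk R hR
  rw [Δf_eq, smul_pow, smul_pow, LinearMap.smul_apply, LinearMap.smul_apply, hG,
    smul_smul, smul_smul]
  congr 1
  rw [Ac, Nat.sub_self, Nat.zero_add, Nat.one_ascFactorial]
  have hd : ((n-k).factorial : ℝ) * (n.descFactorial k : ℝ) = (n.factorial : ℝ) := by
    exact_mod_cast congrArg (Nat.cast (R := ℝ)) (Nat.factorial_mul_descFactorial hk)
  have h4 : (4:ℝ)^k * 4^(n-k) = 4^n := by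
    rw [← pow_add]
    congr 1
    omega
  have hF : ((n-k).factorial : ℝ) ≠ 0 := Nat.cast_ne_zero.mpr (Nat.factorial_ne_zero _)
  rw [← h4]
  field_simp
  linear_combination hd


end SuperCauchy
end
end
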